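/- arXiv:0910.0633 — 5 statements merged into one kernel-verified Lean document; each statement's English description precedes it below -/
import Mathlib

section
/- (Proposition 3.7) Let 𝔞 → A be a homomorphism of finite-dimensional K-algebras such that, regarding A as a left 𝔞-module via this homomorphism, (rad 𝔞)A = rad A. Then for finite-dimensional A-modules M and L with L completely reducible, the natural restriction map Ext^1_A(M,L) → Ext^1_𝔞(M,L) is injective; equivalently, every short exact sequence 0 → L → E → M → 0 of A-modules which splits after restriction of scalars along 𝔞 → A already splits as a sequence of A-modules. -/
/-- The Jacobson radical of a `K`-algebra `A`, viewed as a `K`-submodule of `A`. -/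
def jacobsonRadical (K : Type*) (A : Type*) [Field K] [Ring A] [Algebra K A] :
    Submodule K A :=
  Submodule.restrictScalars K (Ideal.jacobson (⊥ : Ideal A))


theorem myJacobson_smul_eq_zero_of_simple {A : Type*} [Ring A] {S : Type*} [AddCommGroup S]
    [Module A S] [IsSimpleModule A S] {r : A} (hr : r ∈ Ideal.jacobson (⊥ : Ideal A)) (s : S) :
    r • s = 0 := by
  rcases eq_or_ne s 0 with rfl | hs
  · exact smul_zero r
  have hmax := IsSimpleModule.ker_toSpanSingleton_isMaximal A hs
  have hle : Ideal.jacobson (⊥ : Ideal A) ≤ LinearMap.ker (LinearMap.toSpanSingleton A S s) :=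
    sInf_le ⟨bot_le, hmax⟩
  simpa using hle hr

theorem myIsSemisimpleModule_of_isSimpleModule {A : Type*} [Ring A] {S : Type*} [AddCommGroup S]
    [Module A S] [IsSimpleModule A S] : IsSemisimpleModule A S := by
  apply IsSemisimpleModule.of_sSup_simples_eq_top
  apply top_le_iff.mp
  refine le_sSup ?_
  show IsSimpleModule A (⊤ : Submodule A S)
  exact IsSimpleModule.congr Submodule.topEquiv


open LinearMap Submodule

-- Step 1: the Jacobson radical of an artinian ring is a finite inf of maximal left ideals
theorem myJacobson_eq_finite_inf {A : Type*} [Ring A] [IsArtinian A A] :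
    ∃ F : Finset (Ideal A), (∀ I ∈ F, I.IsMaximal) ∧ F.inf id = Ideal.jacobson (⊥ : Ideal A) := by
  classical
  set T : Set (Ideal A) :=
    {N | ∃ F : Finset (Ideal A), (∀ I ∈ F, I.IsMaximal) ∧ N = F.inf id} with hT
  obtain ⟨N, ⟨F, hF, rfl⟩, hmin⟩ :=
    IsArtinian.set_has_minimal T ⟨⊤, ∅, by simp, by simp⟩
  refine ⟨F, hF, ?_⟩
  have h1 : Ideal.jacobson (⊥ : Ideal A) ≤ F.inf id := by
    refine Finset.le_inf fun I hI => ?_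
    exact sInf_le ⟨bot_le, hF I hI⟩
  have h2 : ∀ I : Ideal A, I.IsMaximal → F.inf id ≤ I := by
    intro I hI
    by_contra hle
    have hmem : F.inf id ⊓ I ∈ T := by
      refine ⟨insert I F, ?_, ?_⟩
      · intro J hJ; rcases Finset.mem_insert.mp hJ with rfl | hJ
        · exact hI
        · exact hF J hJ
      · rw [Finset.inf_insert]; exact (inf_comm _ _)
    exact hmin _ hmem (lt_of_le_of_ne inf_le_left (fun h => hle (h ▸ inf_le_right)))
  have h3 : F.inf id ≤ Ideal.jacobson (⊥ : Ideal A) :=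
    le_sInf fun I hI => h2 I hI.2
  exact le_antisymm h3 h1

theorem myIsSemisimpleModule_of_jacobson_smul {A : Type*} [Ring A] [IsArtinian A A]
    {X : Type*} [AddCommGroup X] [Module A X]
    (h : ∀ r ∈ Ideal.jacobson (⊥ : Ideal A), ∀ x : X, r • x = 0) :
    IsSemisimpleModule A X := by
  classical
  obtain ⟨F, hF, hinf⟩ := myJacobson_eq_finite_inf (A := A)
  -- the product of the simple quotients is semisimple
  haveI hPi : IsSemisimpleModule A (∀ i : F, A ⧸ (i.1 : Submodule A A)) := by
    apply isSemisimpleModule_of_isSemisimpleModule_submodule'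
      (p := fun i : F => range (LinearMap.single A (fun j : F => A ⧸ (j.1 : Submodule A A)) i))
    · intro i
      haveI : IsSimpleModule A (A ⧸ (i.1 : Submodule A A)) :=
        isSimpleModule_iff_isCoatom.mpr (Ideal.isMaximal_def.mp (hF i.1 i.2))
      haveI : IsSemisimpleModule A (A ⧸ (i.1 : Submodule A A)) :=
        (by
        apply IsSemisimpleModule.of_sSup_simples_eq_top
        exact top_le_iff.mp (le_sSup (show IsSimpleModule A (⊤ : Submodule A _) from IsSimpleModule.congr Submodule.topEquiv)))
      exact IsSemisimpleModule.congr
        (LinearEquiv.ofInjective _ (Pi.single_injective (M := fun j : F => A ⧸ (j.1 : Submodule A A)) i)).symm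
    · exact LinearMap.iSup_range_single A _
  -- A ⧸ jacobson is semisimple
  let ψ : A →ₗ[A] (∀ i : F, A ⧸ (i.1 : Submodule A A)) :=
    LinearMap.pi fun i : F => (i.1 : Submodule A A).mkQ
  have hker : ker ψ = Ideal.jacobson (⊥ : Ideal A) := by
    rw [ker_pi, ← hinf]
    simp only [Submodule.ker_mkQ]
    rw [Finset.inf_id_eq_sInf, sInf_eq_iInf']; rfl
  haveI hAJ : IsSemisimpleModule A (A ⧸ (Ideal.jacobson (⊥ : Ideal A) : Submodule A A)) := by
    have e1 : (A ⧸ (Ideal.jacobson (⊥ : Ideal A) : Submodule A A)) ≃ₗ[A] range ψ :=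
      (Submodule.quotEquivOfEq _ _ hker.symm).trans (LinearMap.quotKerEquivRange ψ)
    exact IsSemisimpleModule.congr (M := ↥(range ψ)) e1
  -- every cyclic submodule of X is semisimple
  apply isSemisimpleModule_of_isSemisimpleModule_submodule'
    (p := fun x : X => Submodule.span A {x})
  · intro x
    set g := LinearMap.toSpanSingleton A X x with hg
    have hJg : (Ideal.jacobson (⊥ : Ideal A) : Submodule A A) ≤ ker g := by
      intro r hr
      simpa [hg, LinearMap.mem_ker] using h r hr x
    let p : (A ⧸ (Ideal.jacobson (⊥ : Ideal A) : Submodule A A)) →ₗ[A] A ⧸ ker g :=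
      Submodule.mapQ _ _ LinearMap.id hJg
    have hp : Function.Surjective p := by
      intro y
      obtain ⟨a, rfl⟩ := Submodule.Quotient.mk_surjective _ y
      exact ⟨Submodule.Quotient.mk a, by simp [p, Submodule.mapQ_apply]; rfl⟩
    haveI : IsSemisimpleModule A (A ⧸ ker g) :=
      IsSemisimpleModule.congr (p.quotKerEquivOfSurjective hp).symm
    haveI : IsSemisimpleModule A (range g) :=
      IsSemisimpleModule.congr (g.quotKerEquivRange).symm
    rw [LinearMap.span_singleton_eq_range]
    infer_instance
  · rw [eq_top_iff]
    intro x _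
    exact Submodule.mem_iSup_of_mem x (Submodule.mem_span_singleton_self x)

/-- Proposition 3.7: let `f : 𝔞 → A` be a homomorphism of finite-dimensional `K`-algebras
such that, regarding `A` as a left `𝔞`-module via `f`, `(rad 𝔞)A = rad A`.  Then for
finite-dimensional `A`-modules `M`, `L` with `L` completely reducible, every short exact
sequence `0 → L → E → M → 0` of `A`-modules which splits after restriction of scalars along
`f` already splits as a sequence of `A`-modules (equivalently, the natural restriction map
`Ext¹_A(M, L) → Ext¹_𝔞(M, L)` is injective). -/
theorem splits_of_splits_restrictScalars
    {K : Type*} [Field K] {𝔞 : Type*} [Ring 𝔞] [Algebra K 𝔞] [FiniteDimensional K 𝔞]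
    {A : Type*} [Ring A] [Algebra K A] [FiniteDimensional K A]
    (f : 𝔞 →ₐ[K] A)
    (hrad : Submodule.map f.toLinearMap (jacobsonRadical K 𝔞) * (⊤ : Submodule K A) =
      jacobsonRadical K A)
    (M L E : Type*)
    [AddCommGroup M] [Module A M] [Module K M] [IsScalarTower K A M] [FiniteDimensional K M]
    [AddCommGroup L] [Module A L] [Module K L] [IsScalarTower K A L] [FiniteDimensional K L]
    [IsSemisimpleModule A L]
    [AddCommGroup E] [Module A E]
    (ι : L →ₗ[A] E) (π : E →ₗ[A] M)
    (hinj : Function.Injective ι) (hsurj : Function.Surjective π)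
    (hexact : LinearMap.range ι = LinearMap.ker π)
    (hsplit :
      letI : Module 𝔞 E := Module.compHom E f.toRingHom
      letI : Module 𝔞 M := Module.compHom M f.toRingHom
      ∃ σ : M →ₗ[𝔞] E, ∀ m : M, π (σ m) = m) :
    ∃ σ : M →ₗ[A] E, ∀ m : M, π (σ m) = m := by
  classical
  letI : Module 𝔞 E := Module.compHom E f.toRingHom
  letI : Module 𝔞 M := Module.compHom M f.toRingHom
  obtain ⟨σ, hσ⟩ := hsplit
  have hsmulE : ∀ (x : 𝔞) (e : E), x • e = f x • e := fun x e => rfl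
  have hsmulM : ∀ (x : 𝔞) (m : M), x • m = f x • m := fun x m => rfl
  -- f maps rad 𝔞 into rad A
  have hfJ : ∀ x : 𝔞, x ∈ jacobsonRadical K 𝔞 → f x ∈ jacobsonRadical K A := by
    intro x hx
    rw [← hrad]
    have : f x * 1 ∈ Submodule.map f.toLinearMap (jacobsonRadical K 𝔞) * (⊤ : Submodule K A) :=
      Submodule.mul_mem_mul (Submodule.mem_map_of_mem hx) trivial
    simpa using this
  -- rad A is a right ideal
  have hJr : ∀ r ∈ jacobsonRadical K A, ∀ a : A, r * a ∈ jacobsonRadical K A := by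
    intro r hr a
    rw [← hrad] at hr ⊢
    refine Submodule.mul_induction_on hr ?_ ?_
    · intro m hm n _
      rw [mul_assoc]
      exact Submodule.mul_mem_mul hm trivial
    · intro x y hx hy
      rw [add_mul]
      exact add_mem hx hy
  -- rad A kills the semisimple module L
  have hJL : ∀ r ∈ jacobsonRadical K A, ∀ l : L, r • l = 0 := by
    intro r hr l
    let Z : Submodule A L :=
      { carrier := {l | ∀ r ∈ jacobsonRadical K A, r • l = 0}
        zero_mem' := fun r _ => smul_zero r
        add_mem' := fun ha hb r hr => by
          rw [smul_add, ha r hr, hb r hr, add_zero]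
        smul_mem' := fun a l hl r hr => by
          rw [← mul_smul]
          exact hl _ (hJr r hr a) }
    have hZ : (⊤ : Submodule A L) ≤ Z := by
      rw [← IsSemisimpleModule.sSup_simples_eq_top A L]
      refine sSup_le fun S hS => ?_
      intro l hl r hr
      haveI : IsSimpleModule A ↥S := hS
      have h0 := myJacobson_smul_eq_zero_of_simple (A := A) (S := ↥S) hr ⟨l, hl⟩
      exact congrArg Subtype.val h0
    exact hZ (show l ∈ (⊤ : Submodule A L) from trivial) r hr
  -- decomposition of any element of E
  have hdec : ∀ e : E, ∃ l : L, e = σ (π e) + ι l := by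
    intro e
    have hm : π (e - σ (π e)) = 0 := by rw [map_sub, hσ, sub_self]
    have : e - σ (π e) ∈ LinearMap.range ι := hexact ▸ LinearMap.mem_ker.mpr hm
    obtain ⟨l, hl⟩ := this
    exact ⟨l, by rw [hl]; abel⟩
  -- elements of (rad A) • E lie in σ(M)
  have hstable : ∀ r ∈ jacobsonRadical K A, ∀ e : E, ∃ m : M, σ m = r • e := by
    intro r hr
    rw [← hrad] at hr
    refine Submodule.mul_induction_on hr ?_ ?_
    · rintro m0 hm0 a _ e
      obtain ⟨x, hx, rfl⟩ := hm0
      obtain ⟨l, hl⟩ := hdec (a • e)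
      refine ⟨x • π (a • e), ?_⟩
      have h1 : σ (x • π (a • e)) = f x • σ (π (a • e)) := by
        rw [map_smul]; rfl
      have h2 : f x • ι l = 0 := by
        rw [← map_smul ι, hJL _ (hfJ x hx) l, map_zero]
      show σ (x • π (a • e)) = (f x * a) • e
      rw [h1, mul_smul]
      conv_rhs => rw [hl]
      rw [smul_add, h2, add_zero]
    · intro r s hr hs e
      obtain ⟨m₁, h₁⟩ := hr e
      obtain ⟨m₂, h₂⟩ := hs e
      exact ⟨m₁ + m₂, by rw [map_add, h₁, h₂, ← add_smul]⟩
  -- the A-submodule generated by (rad A) • E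
  let S₀ : Set E := {t | ∃ r ∈ jacobsonRadical K A, ∃ e : E, t = r • e}
  let T : Submodule A E :=
    { carrier := (AddSubmonoid.closure S₀ : AddSubmonoid E)
      zero_mem' := zero_mem _
      add_mem' := fun ha hb => add_mem ha hb
      smul_mem' := by
        intro a t ht
        refine AddSubmonoid.closure_induction ?_ ?_ ?_ ht
        · rintro t ⟨r, hr, e, rfl⟩
          refine AddSubmonoid.subset_closure ⟨a * r, ?_, e, ?_⟩
          · show a * r ∈ Ideal.jacobson (⊥ : Ideal A)
            exact Ideal.mul_mem_left _ a hr
          · rw [mul_smul]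
        · rw [smul_zero]; exact zero_mem _
        · intro x y _ _ hx hy
          rw [smul_add]; exact add_mem hx hy }
  have hT0 : ∀ r ∈ jacobsonRadical K A, ∀ e : E, r • e ∈ T :=
    fun r hr e => AddSubmonoid.subset_closure ⟨r, hr, e, rfl⟩
  have hTW : ∀ t ∈ T, ∃ m : M, σ m = t := by
    intro t ht
    refine AddSubmonoid.closure_induction ?_ ?_ ?_ ht
    · rintro t ⟨r, hr, e, rfl⟩
      exact hstable r hr e
    · exact ⟨0, map_zero σ⟩
    · rintro x y _ _ ⟨m₁, h₁⟩ ⟨m₂, h₂⟩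
      exact ⟨m₁ + m₂, by rw [map_add, h₁, h₂]⟩
  have hTL : ∀ l : L, ι l ∈ T → l = 0 := by
    intro l hl
    obtain ⟨m, hm⟩ := hTW _ hl
    have hπιl : π (ι l) = 0 := by
      have : ι l ∈ LinearMap.ker π := hexact ▸ LinearMap.mem_range_self ι l
      exact this
    have hm0 : m = 0 := by rw [← hσ m, hm, hπιl]
    apply hinj
    rw [← hm, hm0, map_zero, map_zero]
  -- quotient construction
  let N : Submodule A M := T.map π
  let πb : (E ⧸ T) →ₗ[A] M ⧸ N :=
    Submodule.mapQ T N π (fun t ht => Submodule.mem_map_of_mem ht)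
  let ιb : L →ₗ[A] E ⧸ T := T.mkQ ∘ₗ ι
  have hπι : ∀ l : L, π (ι l) = 0 := by
    intro l
    have : ι l ∈ LinearMap.ker π := hexact ▸ LinearMap.mem_range_self ι l
    exact this
  have hιb0 : ∀ l : L, ιb l = 0 → l = 0 := by
    intro l hl
    apply hTL
    have : T.mkQ (ι l) = 0 := hl
    rwa [← LinearMap.mem_ker, Submodule.ker_mkQ] at this
  have hιb_inj : Function.Injective ιb := by
    intro l l' hll
    have h0 : ιb (l - l') = 0 := by rw [map_sub, hll, sub_self]
    have := hιb0 _ h0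
    exact sub_eq_zero.mp this
  have hπbσ : ∀ m : M, πb (T.mkQ (σ m)) = N.mkQ m := by
    intro m
    show πb (Submodule.Quotient.mk (σ m)) = _
    rw [Submodule.mapQ_apply, hσ]
    rfl
  have hπbι : ∀ l : L, πb (ιb l) = 0 := by
    intro l
    show πb (Submodule.Quotient.mk (ι l)) = 0
    rw [Submodule.mapQ_apply, hπι, Submodule.Quotient.mk_zero]
  have hker : ∀ y : E ⧸ T, πb y = 0 → ∃ l : L, ιb l = y := by
    intro y hy
    obtain ⟨e, rfl⟩ := Submodule.Quotient.mk_surjective T y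
    rw [show πb (Submodule.Quotient.mk e) = Submodule.Quotient.mk (π e) from rfl,
      Submodule.Quotient.mk_eq_zero] at hy
    obtain ⟨t, ht, hte⟩ := hy
    have h1 : π (e - t) = 0 := by rw [map_sub, hte, sub_self]
    have h2 : e - t ∈ LinearMap.range ι := hexact ▸ LinearMap.mem_ker.mpr h1
    obtain ⟨l, hl⟩ := h2
    refine ⟨l, ?_⟩
    show Submodule.Quotient.mk (ι l) = Submodule.Quotient.mk e
    rw [hl, Submodule.Quotient.eq]
    simpa using neg_mem ht
  have hkill : ∀ r ∈ Ideal.jacobson (⊥ : Ideal A), ∀ y : E ⧸ T, r • y = 0 := by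
    intro r hr y
    obtain ⟨e, rfl⟩ := Submodule.Quotient.mk_surjective T y
    rw [← Submodule.Quotient.mk_smul, Submodule.Quotient.mk_eq_zero]
    exact hT0 r hr e
  haveI : IsArtinian A A := isArtinian_of_tower K inferInstance
  haveI : IsSemisimpleModule A (E ⧸ T) := myIsSemisimpleModule_of_jacobson_smul hkill
  obtain ⟨C, hC⟩ := exists_isCompl (LinearMap.range ιb)
  let ρ : C →ₗ[A] M ⧸ N := πb ∘ₗ C.subtype
  have hρinj : Function.Injective ρ := by
    rw [← LinearMap.ker_eq_bot, eq_bot_iff]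
    rintro ⟨c, hc⟩ h0
    rw [LinearMap.mem_ker] at h0
    have hc0 : πb c = 0 := h0
    obtain ⟨l, hl⟩ := hker c hc0
    have hmem : c ∈ LinearMap.range ιb ⊓ C := ⟨⟨l, hl⟩, hc⟩
    rw [hC.inf_eq_bot, Submodule.mem_bot] at hmem
    exact (Submodule.mem_bot _).mpr (Subtype.ext hmem)
  have hρsurj : Function.Surjective ρ := by
    intro y
    obtain ⟨m, rfl⟩ := Submodule.Quotient.mk_surjective N y
    have hmem : T.mkQ (σ m) ∈ LinearMap.range ιb ⊔ C := by
      rw [hC.sup_eq_top]; trivial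
    obtain ⟨u, hu, c, hc, huc⟩ := Submodule.mem_sup.mp hmem
    obtain ⟨l, rfl⟩ := hu
    refine ⟨⟨c, hc⟩, ?_⟩
    have h2 : c = T.mkQ (σ m) - ιb l := by rw [← huc, add_sub_cancel_left]
    show πb c = Submodule.Quotient.mk m
    rw [h2, map_sub, hπbι, sub_zero]
    exact hπbσ m
  let eqv := LinearEquiv.ofBijective ρ ⟨hρinj, hρsurj⟩
  let sb : (M ⧸ N) →ₗ[A] E ⧸ T := C.subtype ∘ₗ eqv.symm.toLinearMap
  have hsb : ∀ y, πb (sb y) = y := fun y => eqv.apply_symm_apply y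
  have hgl : ∀ m : M, ∃ l : L, ιb l = sb (N.mkQ m) - T.mkQ (σ m) := by
    intro m
    apply hker
    rw [map_sub, hsb, hπbσ, sub_self]
  choose h hh using hgl
  have hh2 : ∀ m' : M, T.mkQ (ι (h m')) = sb (N.mkQ m') - T.mkQ (σ m') := fun m' => hh m'
  have key : ∀ z : E, π z = 0 → T.mkQ z = 0 → z = 0 := by
    intro z h1 h2
    have hz : z ∈ LinearMap.range ι := hexact ▸ LinearMap.mem_ker.mpr h1
    obtain ⟨l, rfl⟩ := hz
    rw [← LinearMap.mem_ker, Submodule.ker_mkQ] at h2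
    rw [hTL l h2, map_zero]
  refine ⟨{ toFun := fun m => σ m + ι (h m), map_add' := ?_, map_smul' := ?_ }, ?_⟩
  · intro m m'
    have hadd : h (m + m') = h m + h m' := by
      apply hιb_inj
      rw [map_add, hh, hh, hh]
      simp only [map_add]
      abel
    show σ (m + m') + ι (h (m + m')) = σ m + ι (h m) + (σ m' + ι (h m'))
    rw [hadd]
    simp only [map_add]
    abel
  · intro a m
    show σ (a • m) + ι (h (a • m)) = a • (σ m + ι (h m))
    have hz1 : π (σ (a • m) + ι (h (a • m)) - (a • σ m + a • ι (h m))) = 0 := by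
      simp only [map_sub, map_add, map_smul, hσ, hπι, smul_zero]
      abel
    have hz2 : T.mkQ (σ (a • m) + ι (h (a • m)) - (a • σ m + a • ι (h m))) = 0 := by
      simp only [map_sub, map_add, map_smul]
      rw [hh2, hh2]
      rw [show N.mkQ (a • m) = a • N.mkQ m from map_smul _ _ _,
        show sb (a • N.mkQ m) = a • sb (N.mkQ m) from map_smul _ _ _]
      simp only [smul_sub]
      abel
    have hz := key _ hz1 hz2
    have hz' := sub_eq_zero.mp hz
    rw [hz', smul_add]
  · intro m
    show π (σ m + ι (h m)) = m
    rw [map_add, hσ, hπι, add_zero]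
end

section
/- (Proposition 4.1(a)) Let A be a finite-dimensional K-algebra, P a finite-dimensional projective left A-module, L a completely reducible finite-dimensional A-module, and r ≥ 1 an integer. Then the natural map Ext^1_A(P/rad^r P, L) → Ext^1_A(rad^{r-1}P/rad^r P, L) induced by the inclusion rad^{r-1}P/rad^r P ↪ P/rad^r P is injective. -/
/-- `radPow A M n = rad^n M = (rad A)^n • M`, the `n`-th radical submodule of an `A`-module `M`,
where `rad A` is the Jacobson radical of `A`. -/
def radPow (A : Type*) [Ring A] (M : Type*) [AddCommGroup M] [Module A M] :
    ℕ → Submodule A M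
  | 0 => ⊤
  | n + 1 => Submodule.span A
      {z : M | ∃ x ∈ Ideal.jacobson (⊥ : Ideal A), ∃ m ∈ radPow A M n, x • m = z}

/-- The Jacobson radical annihilates every simple module. -/
lemma jacobson_smul_eq_zero_of_simple {A : Type*} [Ring A] {N : Type*} [AddCommGroup N]
    [Module A N] [IsSimpleModule A N] {a : A} (ha : a ∈ Ideal.jacobson (⊥ : Ideal A))
    (n : N) : a • n = 0 := by
  rcases eq_or_ne n 0 with rfl | hn
  · simp
  have hsur : Function.Surjective (LinearMap.toSpanSingleton A N n) := by
    rw [← LinearMap.range_eq_top, ← LinearMap.span_singleton_eq_range]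
    rcases eq_bot_or_eq_top (Submodule.span A {n}) with h | h
    · exact absurd (Submodule.span_singleton_eq_bot.mp h) hn
    · exact h
  have hco : IsCoatom (LinearMap.ker (LinearMap.toSpanSingleton A N n)) :=
    LinearMap.isCoatom_ker_of_surjective hsur
  have hmem : a ∈ LinearMap.ker (LinearMap.toSpanSingleton A N n) :=
    Submodule.mem_sInf.mp ha _ ⟨bot_le, Ideal.isMaximal_def.mpr hco⟩
  simpa [LinearMap.mem_ker, LinearMap.toSpanSingleton_apply] using hmem

/-- The Jacobson radical annihilates every semisimple module. -/
lemma jacobson_smul_eq_zero {A : Type*} [Ring A] {L : Type*} [AddCommGroup L]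
    [Module A L] [IsSemisimpleModule A L] {a : A} (ha : a ∈ Ideal.jacobson (⊥ : Ideal A))
    (l : L) : a • l = 0 := by
  have htop : l ∈ sSup {m : Submodule A L | IsSimpleModule A m} := by
    rw [IsSemisimpleModule.sSup_simples_eq_top A L]; trivial
  rw [sSup_eq_iSup'] at htop
  refine Submodule.iSup_induction (motive := fun x => a • x = 0) _ htop ?_ (by simp) ?_
  · rintro ⟨S, hS⟩ x hx
    haveI : IsSimpleModule A S := hS
    have h0 := jacobson_smul_eq_zero_of_simple (N := S) ha ⟨x, hx⟩
    have := congrArg (Submodule.subtype S) h0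
    simpa using this
  · intro x y hx hy
    rw [smul_add, hx, hy, add_zero]

lemma radPow_succ_le {A : Type*} [Ring A] {M : Type*} [AddCommGroup M] [Module A M]
    (n : ℕ) : radPow A M (n + 1) ≤ radPow A M n := by
  rw [radPow]
  refine Submodule.span_le.mpr ?_
  rintro z ⟨x, _, m, hm, rfl⟩
  exact (radPow A M n).smul_mem x hm

/-- Proposition 4.1(a): for a finite-dimensional `K`-algebra `A`, a finite-dimensional
projective `A`-module `P`, a completely reducible finite-dimensional `A`-module `L` and `r ≥ 1`,
the natural map `Ext¹_A(P/rad^r P, L) → Ext¹_A(rad^{r-1}P/rad^r P, L)` induced by the inclusion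
`rad^{r-1}P/rad^r P ↪ P/rad^r P` is injective.  Equivalently (injectivity = trivial kernel):
every extension `0 → L → E → P/rad^r P → 0` whose pullback along the inclusion splits (i.e. the
inclusion lifts through `E`) is itself split. -/
theorem ext_injective_of_radical_quotient
    {K : Type*} [Field K] {A : Type*} [Ring A] [Algebra K A] [FiniteDimensional K A]
    (P : Type*) [AddCommGroup P] [Module A P] [Module K P] [IsScalarTower K A P]
    [FiniteDimensional K P] [Module.Projective A P]
    (L : Type*) [AddCommGroup L] [Module A L] [Module K L] [IsScalarTower K A L]
    [FiniteDimensional K L] [IsSemisimpleModule A L]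
    (r : ℕ) (hr : 1 ≤ r)
    (E : Type*) [AddCommGroup E] [Module A E]
    (ι : L →ₗ[A] E) (π : E →ₗ[A] (P ⧸ radPow A P r))
    (hinj : Function.Injective ι) (hsurj : Function.Surjective π)
    (hexact : LinearMap.range ι = LinearMap.ker π)
    (hpullback : ∃ φ : (Submodule.map (radPow A P r).mkQ (radPow A P (r - 1))) →ₗ[A] E,
      ∀ x : (Submodule.map (radPow A P r).mkQ (radPow A P (r - 1))),
        π (φ x) = (x : P ⧸ radPow A P r)) :
    ∃ σ : (P ⧸ radPow A P r) →ₗ[A] E, ∀ y : P ⧸ radPow A P r, π (σ y) = y := by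
  obtain ⟨φ, hφ⟩ := hpullback
  have hrr : r - 1 + 1 = r := Nat.succ_pred_eq_of_pos hr
  obtain ⟨ψ, hψ⟩ := Module.projective_lifting_property π (radPow A P r).mkQ hsurj
  have hψ' : ∀ p : P, π (ψ p) = (radPow A P r).mkQ p := fun p => LinearMap.congr_fun hψ p
  let j : (radPow A P (r - 1)) →ₗ[A] (Submodule.map (radPow A P r).mkQ (radPow A P (r - 1))) :=
    LinearMap.codRestrict _ ((radPow A P r).mkQ ∘ₗ (radPow A P (r - 1)).subtype)
      (fun x => ⟨x.1, x.2, rfl⟩)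
  have hjval : ∀ x : radPow A P (r - 1),
      ((j x : P ⧸ radPow A P r)) = (radPow A P r).mkQ x.1 := fun x => rfl
  have hdiff : ∀ m : radPow A P (r - 1), ∃ l : L, ψ m.1 - φ (j m) = ι l := by
    intro m
    have hk : ψ m.1 - φ (j m) ∈ LinearMap.ker π := by
      rw [LinearMap.mem_ker, map_sub, hψ' m.1, hφ (j m), hjval m, sub_self]
    rw [← hexact] at hk
    obtain ⟨l, hl⟩ := hk
    exact ⟨l, hl.symm⟩
  have hker : radPow A P r ≤ LinearMap.ker ψ := by
    intro z hz
    rw [LinearMap.mem_ker]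
    have hz' : z ∈ Submodule.span A
        {w : P | ∃ x ∈ Ideal.jacobson (⊥ : Ideal A), ∃ m ∈ radPow A P (r - 1), x • m = w} := by
      rw [← hrr, radPow] at hz
      exact hz
    refine Submodule.span_induction ?_ (map_zero ψ) ?_ ?_ hz'
    · rintro w ⟨x, hx, m, hm, rfl⟩
      set m' : radPow A P (r - 1) := ⟨m, hm⟩ with hm'
      obtain ⟨l, hl⟩ := hdiff m'
      have hsplit : ψ m = φ (j m') + ι l := by
        rw [sub_eq_iff_eq_add] at hl
        rw [hl, add_comm]
      rw [map_smul, hsplit, smul_add]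
      have h1 : x • φ (j m') = 0 := by
        rw [← map_smul, ← map_smul]
        have hj0 : j (x • m') = 0 := by
          apply Subtype.ext
          show ((j (x • m') : P ⧸ radPow A P r)) = 0
          rw [hjval]
          show (radPow A P r).mkQ (x • m) = 0
          rw [Submodule.mkQ_apply, Submodule.Quotient.mk_eq_zero]
          have hmem : x • m ∈ radPow A P (r - 1 + 1) := by
            rw [radPow]
            exact Submodule.subset_span ⟨x, hx, m, hm, rfl⟩
          rwa [hrr] at hmem
        rw [hj0, map_zero]
      have h2 : x • ι l = 0 := by
        rw [← map_smul, jacobson_smul_eq_zero hx l, map_zero]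
      rw [h1, h2, add_zero]
    · intro y z _ _ hy hz
      rw [map_add, hy, hz, add_zero]
    · intro a y _ hy
      rw [map_smul, hy, smul_zero]
  refine ⟨(radPow A P r).liftQ ψ hker, ?_⟩
  intro y
  obtain ⟨p, rfl⟩ := Submodule.mkQ_surjective (radPow A P r) y
  rw [Submodule.mkQ_apply, Submodule.liftQ_apply, hψ' p, Submodule.mkQ_apply]
end

section
/- (Corollary 2.2) Let 𝔞 = ⊕_{n≥0} 𝔞_n be a finite-dimensional tightly graded K-algebra, and let M = ⊕_n M_n and M' = ⊕_n M'_n be finite-dimensional graded 𝔞-modules, each generated in grade 0. If M and M' are isomorphic as ungraded 𝔞-modules, then there exists an 𝔞-module isomorphism M → M' carrying M_n onto M'_n for every n (i.e. M ≅ M' as graded 𝔞-modules). -/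
open DirectSum

set_option synthInstance.maxHeartbeats 800000
set_option maxHeartbeats 1600000
set_option linter.unusedSectionVars false

section Aux

variable {K : Type*} [Field K] {𝔞 : Type*} [Ring 𝔞] [Algebra K 𝔞]
  (𝒜 : ℕ → Submodule K 𝔞) [GradedAlgebra 𝒜]
  {N : Type*} [AddCommGroup N] [Module 𝔞 N] [Module K N] [IsScalarTower K 𝔞 N]
  (𝒩 : ℕ → Submodule K N) [DirectSum.Decomposition 𝒩]

/-- Homogeneous scalar action moves graded components predictably. -/
lemma aux_decompose_smul_homog
    (hact : ∀ i j : ℕ, ∀ a ∈ 𝒜 i, ∀ m ∈ 𝒩 j, a • m ∈ 𝒩 (i + j))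
    {i : ℕ} {a : 𝔞} (ha : a ∈ 𝒜 i) (y : N) (j : ℕ) :
    (DirectSum.decompose 𝒩 (a • y) (i + j) : N) = a • (DirectSum.decompose 𝒩 y j : N) := by
  refine DirectSum.Decomposition.inductionOn 𝒩
    (motive := fun y => (DirectSum.decompose 𝒩 (a • y) (i + j) : N)
      = a • (DirectSum.decompose 𝒩 y j : N)) ?_ ?_ ?_ y
  · simp
  · rintro n ⟨m, hm⟩
    show (DirectSum.decompose 𝒩 (a • m) (i + j) : N) = a • (DirectSum.decompose 𝒩 m j : N)
    by_cases hnj : n = j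
    · subst hnj
      rw [DirectSum.decompose_of_mem_same 𝒩 hm,
        DirectSum.decompose_of_mem_same 𝒩 (hact i n a ha m hm)]
    · rw [DirectSum.decompose_of_mem_ne 𝒩 hm hnj,
        DirectSum.decompose_of_mem_ne 𝒩 (hact i n a ha m hm)
          (fun h => hnj (Nat.add_left_cancel h)), smul_zero]
  · intro u v hu hv
    show (DirectSum.decompose 𝒩 (a • (u + v)) (i + j) : N)
      = a • (DirectSum.decompose 𝒩 (u + v) j : N)
    have hu' : (DirectSum.decompose 𝒩 (a • u) (i + j) : N)
      = a • (DirectSum.decompose 𝒩 u j : N) := hu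
    have hv' : (DirectSum.decompose 𝒩 (a • v) (i + j) : N)
      = a • (DirectSum.decompose 𝒩 v j : N) := hv
    simp only [smul_add, DirectSum.decompose_add, DirectSum.add_apply, Submodule.coe_add,
      hu', hv']

/-- A positively-graded scalar annihilates degree-0 components. -/
lemma aux_decompose_smul_pos
    (hact : ∀ i j : ℕ, ∀ a ∈ 𝒜 i, ∀ m ∈ 𝒩 j, a • m ∈ 𝒩 (i + j))
    {i : ℕ} (hi : i ≠ 0) {a : 𝔞} (ha : a ∈ 𝒜 i) (y : N) :
    (DirectSum.decompose 𝒩 (a • y) 0 : N) = 0 := by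
  refine DirectSum.Decomposition.inductionOn 𝒩
    (motive := fun y => (DirectSum.decompose 𝒩 (a • y) 0 : N) = 0) ?_ ?_ ?_ y
  · simp
  · rintro n ⟨m, hm⟩
    show (DirectSum.decompose 𝒩 (a • m) 0 : N) = 0
    exact DirectSum.decompose_of_mem_ne 𝒩 (hact i n a ha m hm)
      (by simp [Nat.add_eq_zero, hi])
  · intro u v hu hv
    show (DirectSum.decompose 𝒩 (a • (u + v)) 0 : N) = 0
    have hu' : (DirectSum.decompose 𝒩 (a • u) 0 : N) = 0 := hu
    have hv' : (DirectSum.decompose 𝒩 (a • v) 0 : N) = 0 := hv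
    simp only [smul_add, DirectSum.decompose_add, DirectSum.add_apply, Submodule.coe_add,
      hu', hv', add_zero]

variable {N' : Type*} [AddCommGroup N'] [Module 𝔞 N'] [Module K N'] [IsScalarTower K 𝔞 N']
  (𝒩' : ℕ → Submodule K N') [DirectSum.Decomposition 𝒩']

/-- The degree-0 homogeneous component of a `K`-linear map between graded modules. -/
noncomputable def fzero (f : N →ₗ[K] N') : N →ₗ[K] N' :=
  (DirectSum.decomposeLinearEquiv 𝒩').symm.toLinearMap ∘ₗ
    (DirectSum.toModule K ℕ (⨁ n, 𝒩' n) (fun n =>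
      (DirectSum.lof K ℕ (fun i => (𝒩' i : Type _)) n) ∘ₗ
        (DirectSum.component K ℕ (fun i => (𝒩' i : Type _)) n) ∘ₗ
          (DirectSum.decomposeLinearEquiv 𝒩').toLinearMap ∘ₗ f ∘ₗ (𝒩 n).subtype)) ∘ₗ
    (DirectSum.decomposeLinearEquiv 𝒩).toLinearMap

lemma fzero_apply_of_mem (f : N →ₗ[K] N') {n : ℕ} {x : N} (hx : x ∈ 𝒩 n) :
    fzero 𝒩 𝒩' f x = (DirectSum.decompose 𝒩' (f x) n : N') := by
  unfold fzero
  simp only [LinearMap.comp_apply, LinearEquiv.coe_toLinearMap,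
    DirectSum.decomposeLinearEquiv_apply, DirectSum.decompose_of_mem 𝒩 hx,
    ← DirectSum.lof_eq_of K, DirectSum.toModule_lof]
  simp only [DirectSum.lof_eq_of, DirectSum.decomposeLinearEquiv_symm_apply,
    DirectSum.decompose_symm_of]
  rfl

end Aux

/-- Corollary 2.2: let `𝔞 = ⊕_{n≥0} 𝔞_n` be a finite-dimensional tightly graded `K`-algebra
(`𝔞_0` semisimple, `𝔞_n = 𝔞_1^n` for `n ≥ 1`), and let `M = ⊕_n M_n`, `M' = ⊕_n M'_n` be
finite-dimensional graded `𝔞`-modules, each generated in grade 0.  If `M ≅ M'` as ungraded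
`𝔞`-modules, then there is an `𝔞`-module isomorphism `M ≃ M'` carrying `M_n` onto `M'_n` for
every `n`, i.e. `M ≅ M'` as graded `𝔞`-modules. -/
theorem graded_iso_of_ungraded_iso
    {K : Type*} [Field K] {𝔞 : Type*} [Ring 𝔞] [Algebra K 𝔞] [FiniteDimensional K 𝔞]
    (𝒜 : ℕ → Submodule K 𝔞) [GradedAlgebra 𝒜]
    (𝔞₀ : Subalgebra K 𝔞) (h𝔞₀ : Subalgebra.toSubmodule 𝔞₀ = 𝒜 0)
    (hss : IsSemisimpleRing 𝔞₀)
    (htight : ∀ n : ℕ, 1 ≤ n → 𝒜 n = 𝒜 1 ^ n)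
    (M : Type*) [AddCommGroup M] [Module 𝔞 M] [Module K M] [IsScalarTower K 𝔞 M]
    [FiniteDimensional K M]
    (ℳ : ℕ → Submodule K M) [DirectSum.Decomposition ℳ]
    (hact : ∀ i j : ℕ, ∀ a ∈ 𝒜 i, ∀ m ∈ ℳ j, a • m ∈ ℳ (i + j))
    (hgen : Submodule.span 𝔞 ((ℳ 0 : Set M)) = ⊤)
    (M' : Type*) [AddCommGroup M'] [Module 𝔞 M'] [Module K M'] [IsScalarTower K 𝔞 M']
    [FiniteDimensional K M']
    (ℳ' : ℕ → Submodule K M') [DirectSum.Decomposition ℳ']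
    (hact' : ∀ i j : ℕ, ∀ a ∈ 𝒜 i, ∀ m ∈ ℳ' j, a • m ∈ ℳ' (i + j))
    (hgen' : Submodule.span 𝔞 ((ℳ' 0 : Set M')) = ⊤)
    (hiso : Nonempty (M ≃ₗ[𝔞] M')) :
    ∃ g : M ≃ₗ[𝔞] M', ∀ n : ℕ,
      Submodule.map ((g.restrictScalars K : M ≃ₗ[K] M') : M →ₗ[K] M') (ℳ n) = ℳ' n := by
  classical
  obtain ⟨f⟩ := hiso
  set fK : M →ₗ[K] M' := f.toLinearMap.restrictScalars K with hfK
  have hfK_apply : ∀ x : M, fK x = f x := fun _ => rfl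
  set F : M →ₗ[K] M' := fzero ℳ ℳ' fK with hFdef
  -- F is graded of degree 0
  have hF_of_mem : ∀ {n : ℕ} {x : M}, x ∈ ℳ n →
      F x = (DirectSum.decompose ℳ' (f x) n : M') := by
    intro n x hx
    rw [hFdef, fzero_apply_of_mem ℳ ℳ' fK hx, hfK_apply]
  have hF_mem : ∀ {n : ℕ} {x : M}, x ∈ ℳ n → F x ∈ ℳ' n := by
    intro n x hx
    rw [hF_of_mem hx]; exact (DirectSum.decompose ℳ' (f x) n).2
  -- F is 𝔞-linear
  have hF_smul : ∀ (a : 𝔞) (x : M), F (a • x) = a • F x := by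
    intro a
    refine DirectSum.Decomposition.inductionOn 𝒜
      (motive := fun a => ∀ x : M, F (a • x) = a • F x) ?_ ?_ ?_ a
    · intro x
      show F ((0 : 𝔞) • x) = (0 : 𝔞) • F x
      rw [zero_smul, zero_smul, map_zero]
    · rintro i ⟨a, ha⟩ x
      show F (a • x) = a • F x
      refine DirectSum.Decomposition.inductionOn ℳ
        (motive := fun x => F (a • x) = a • F x) ?_ ?_ ?_ x
      · show F (a • (0 : M)) = a • F (0 : M)
        rw [smul_zero, map_zero, smul_zero]
      · rintro j ⟨m, hm⟩
        show F (a • m) = a • F m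
        rw [hF_of_mem (hact i j a ha m hm), hF_of_mem hm,
          map_smul f a m, ← aux_decompose_smul_homog 𝒜 ℳ' hact' ha (f m) j]
      · intro u v hu hv
        show F (a • (u + v)) = a • F (u + v)
        have hu' : F (a • u) = a • F u := hu
        have hv' : F (a • v) = a • F v := hv
        rw [smul_add, map_add, hu', hv', map_add, smul_add]
    · intro a b ha hb x
      show F ((a + b) • x) = (a + b) • F x
      have ha' : F (a • x) = a • F x := ha x
      have hb' : F (b • x) = b • F x := hb x
      rw [add_smul, map_add, ha', hb', add_smul]
  -- the key identity: the degree-0 component of f is computed by F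
  have hE : ∀ m : M, (DirectSum.decompose ℳ' (f m) 0 : M') =
      F ((DirectSum.decompose ℳ m 0 : M)) := by
    intro m
    have hm : m ∈ Submodule.span 𝔞 ((ℳ 0 : Set M)) := hgen ▸ Submodule.mem_top
    refine Submodule.span_induction
      (p := fun m _ => (DirectSum.decompose ℳ' (f m) 0 : M') =
        F ((DirectSum.decompose ℳ m 0 : M))) ?_ ?_ ?_ ?_ hm
    · intro x hx
      rw [DirectSum.decompose_of_mem_same ℳ hx, hF_of_mem hx]
    · simp
    · intro x y _ _ hx hy
      simp only [map_add, DirectSum.decompose_add, DirectSum.add_apply, Submodule.coe_add,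
        hx, hy]
    · intro a m _ hIH
      refine DirectSum.Decomposition.inductionOn 𝒜
        (motive := fun a => (DirectSum.decompose ℳ' (f (a • m)) 0 : M') =
          F ((DirectSum.decompose ℳ (a • m) 0 : M))) ?_ ?_ ?_ a
      · show (DirectSum.decompose ℳ' (f ((0 : 𝔞) • m)) 0 : M') =
          F ((DirectSum.decompose ℳ ((0 : 𝔞) • m) 0 : M))
        simp
      · rintro i ⟨a, ha⟩
        show (DirectSum.decompose ℳ' (f (a • m)) 0 : M') =
          F ((DirectSum.decompose ℳ (a • m) 0 : M))
        by_cases hi : i = 0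
        · subst hi
          have h1 := aux_decompose_smul_homog 𝒜 ℳ' hact' ha (f m) 0
          have h2 := aux_decompose_smul_homog 𝒜 ℳ hact ha m 0
          rw [Nat.zero_add] at h1 h2
          rw [map_smul f a m, h1, hIH, h2, hF_smul]
        · rw [map_smul f a m, aux_decompose_smul_pos 𝒜 ℳ' hact' hi ha (f m),
            aux_decompose_smul_pos 𝒜 ℳ hact hi ha m, map_zero]
      · intro a b ha' hb'
        show (DirectSum.decompose ℳ' (f ((a + b) • m)) 0 : M') =
          F ((DirectSum.decompose ℳ ((a + b) • m) 0 : M))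
        have ha'' : (DirectSum.decompose ℳ' (f (a • m)) 0 : M') =
          F ((DirectSum.decompose ℳ (a • m) 0 : M)) := ha'
        have hb'' : (DirectSum.decompose ℳ' (f (b • m)) 0 : M') =
          F ((DirectSum.decompose ℳ (b • m) 0 : M)) := hb'
        simp only [add_smul, map_add, DirectSum.decompose_add, DirectSum.add_apply,
          Submodule.coe_add, ha'', hb'']
  -- bundle F as an 𝔞-linear map
  let F' : M →ₗ[𝔞] M' :=
    { toFun := F
      map_add' := F.map_add
      map_smul' := hF_smul }
  have hF'_apply : ∀ x, F' x = F x := fun _ => rfl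
  -- surjectivity
  have hsurj : Function.Surjective F' := by
    rw [← LinearMap.range_eq_top, ← top_le_iff, ← hgen', Submodule.span_le]
    intro y hy
    have hfy : f (f.symm y) = y := f.apply_symm_apply y
    have h0 : (DirectSum.decompose ℳ' y 0 : M') = y :=
      DirectSum.decompose_of_mem_same ℳ' hy
    refine ⟨(DirectSum.decompose ℳ (f.symm y) 0 : M), ?_⟩
    show F ((DirectSum.decompose ℳ (f.symm y) 0 : M)) = y
    rw [← hE (f.symm y), hfy, h0]
  have hinj : Function.Injective F' := by
    have hfr : Module.finrank K M = Module.finrank K M' :=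
      (f.restrictScalars K : M ≃ₗ[K] M').finrank_eq
    exact (LinearMap.injective_iff_surjective_of_finrank_eq_finrank (f := F) hfr).mpr hsurj
  refine ⟨LinearEquiv.ofBijective F' ⟨hinj, hsurj⟩, ?_⟩
  intro n
  have hg_apply : ∀ x : M,
      ((((LinearEquiv.ofBijective F' ⟨hinj, hsurj⟩).restrictScalars K : M ≃ₗ[K] M')) :
        M →ₗ[K] M') x = F x := fun _ => rfl
  -- F commutes with projections
  have hproj : ∀ (z : M), (DirectSum.decompose ℳ' (F z) n : M') =
      F ((DirectSum.decompose ℳ z n : M)) := by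
    intro z
    refine DirectSum.Decomposition.inductionOn ℳ
      (motive := fun z => (DirectSum.decompose ℳ' (F z) n : M') =
        F ((DirectSum.decompose ℳ z n : M))) ?_ ?_ ?_ z
    · simp
    · rintro m ⟨x, hx⟩
      show (DirectSum.decompose ℳ' (F x) n : M') = F ((DirectSum.decompose ℳ x n : M))
      by_cases hmn : m = n
      · subst hmn
        rw [DirectSum.decompose_of_mem_same ℳ hx,
          DirectSum.decompose_of_mem_same ℳ' (hF_mem hx)]
      · rw [DirectSum.decompose_of_mem_ne ℳ hx hmn,
          DirectSum.decompose_of_mem_ne ℳ' (hF_mem hx) hmn, map_zero]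
    · intro u v hu hv
      show (DirectSum.decompose ℳ' (F (u + v)) n : M') =
        F ((DirectSum.decompose ℳ (u + v) n : M))
      have hu' : (DirectSum.decompose ℳ' (F u) n : M') =
        F ((DirectSum.decompose ℳ u n : M)) := hu
      have hv' : (DirectSum.decompose ℳ' (F v) n : M') =
        F ((DirectSum.decompose ℳ v n : M)) := hv
      simp only [map_add, DirectSum.decompose_add, DirectSum.add_apply, Submodule.coe_add,
        hu', hv']
  apply le_antisymm
  · rintro y ⟨x, hx, rfl⟩
    rw [hg_apply]
    exact hF_mem hx
  · intro y hy
    obtain ⟨z, hz⟩ := hsurj y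
    refine ⟨(DirectSum.decompose ℳ z n : M), (DirectSum.decompose ℳ z n).2, ?_⟩
    rw [hg_apply, ← hproj z, show F z = y from hz]
    exact DirectSum.decompose_of_mem_same ℳ' hy
end

section
/- Let A = ⊕_{n≥0} A_n be a finite-dimensional tightly graded K-algebra. Let E be a finite-dimensional graded A-module and S ⊆ E a graded submodule such that S is a simple A-module concentrated in the single grade s and E/S is a simple A-module concentrated in the single grade 0. If s ≠ 1, then S has a graded complement in E: there is a graded A-submodule T ⊆ E with E = S ⊕ T. (Graded extensions between irreducible modules over a tightly graded algebra split unless the grades differ by 1.) -/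
/-- Let `A = ⊕_{n≥0} A_n` be a finite-dimensional tightly graded `K`-algebra (here graded by
`ℤ` with vanishing negative part: `A_0` is semisimple and `A_n = A_1^n` for `n ≥ 1`).  Let `E`
be a finite-dimensional graded `A`-module and `S ⊆ E` a (necessarily graded) submodule which is
simple and concentrated in the single grade `s` (i.e. `S ⊆ E_s`), such that `E/S` is simple and
concentrated in grade `0` (i.e. `E_n ⊆ S` for all `n ≠ 0`).  If `s ≠ 1` then `S` has a graded
complement: there is a graded `A`-submodule `T` of `E` with `E = S ⊕ T`.  (Graded extensions
between irreducible modules over a tightly graded algebra split unless the grades differ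
by 1.) -/
theorem graded_extension_splits_of_grade_ne_one
    {K : Type*} [Field K] {A : Type*} [Ring A] [Algebra K A] [FiniteDimensional K A]
    (𝒜 : ℤ → Submodule K A) [GradedAlgebra 𝒜]
    (hneg : ∀ n : ℤ, n < 0 → 𝒜 n = ⊥)
    (A₀ : Subalgebra K A) (hA₀ : Subalgebra.toSubmodule A₀ = 𝒜 0)
    (hss : IsSemisimpleRing A₀)
    (htight : ∀ n : ℕ, 1 ≤ n → 𝒜 (n : ℤ) = 𝒜 1 ^ n)
    (E : Type*) [AddCommGroup E] [Module A E] [Module K E] [IsScalarTower K A E]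
    [FiniteDimensional K E]
    (ℰ : ℤ → Submodule K E) [DirectSum.Decomposition ℰ]
    (hact : ∀ i j : ℤ, ∀ a ∈ 𝒜 i, ∀ m ∈ ℰ j, a • m ∈ ℰ (i + j))
    (s : ℤ) (hs : s ≠ 1)
    (S : Submodule A E) [IsSimpleModule A S] [IsSimpleModule A (E ⧸ S)]
    (hSgrade : S.restrictScalars K ≤ ℰ s)
    (hQgrade : ∀ n : ℤ, n ≠ 0 → ℰ n ≤ S.restrictScalars K) :
    ∃ T : Submodule A E,
      (T.restrictScalars K = ⨆ n : ℤ, T.restrictScalars K ⊓ ℰ n) ∧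
      S ⊓ T = ⊥ ∧ S ⊔ T = ⊤ := by
  classical
  have hinternal : DirectSum.IsInternal ℰ := DirectSum.Decomposition.isInternal ℰ
  have hindep := hinternal.submodule_iSupIndep
  -- All grades other than `0` and `s` vanish.
  have hbot : ∀ n : ℤ, n ≠ 0 → n ≠ s → ℰ n = ⊥ := by
    intro n hn0 hns
    have h1 : ℰ n ≤ ℰ s := le_trans (hQgrade n hn0) hSgrade
    have h2 : Disjoint (ℰ n) (ℰ s) := hindep.pairwiseDisjoint hns
    exact le_bot_iff.mp (h2 le_rfl h1)
  -- Elements of positive (or any nonzero) degree annihilate `ℰ 0`.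
  have hEzero : ∀ (n : ℤ), n ≠ 0 → ∀ a ∈ 𝒜 n, ∀ x ∈ ℰ 0, a • x = 0 := by
    intro n hn a ha x hx
    by_cases hns : n = s
    · subst hns
      rcases lt_trichotomy n 0 with h | h | h
      · rw [hneg n h] at ha
        rw [(Submodule.mem_bot K).mp ha, zero_smul]
      · exact absurd h hn
      · -- here `n = s > 0`, so `n ≥ 1` and `𝒜 n = 𝒜 1 ^ n`; since `ℰ 1 = ⊥` the action is 0
        have hE1 : ℰ 1 = ⊥ := hbot 1 one_ne_zero (Ne.symm hs)
        obtain ⟨m, rfl⟩ : ∃ m : ℕ, n = (m : ℤ) := ⟨n.toNat, (Int.toNat_of_nonneg h.le).symm⟩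
        have hm1 : 1 ≤ m := by exact_mod_cast h
        obtain ⟨k, rfl⟩ : ∃ k, m = k + 1 := ⟨m - 1, (Nat.succ_pred_eq_of_pos hm1).symm⟩
        rw [htight (k + 1) hm1, pow_succ] at ha
        refine Submodule.mul_induction_on ha (fun b hb c hc => ?_) (fun y z hy hz => ?_)
        · have hcx : c • x ∈ ℰ 1 := by
            have := hact 1 0 c hc x hx
            rwa [add_zero] at this
          rw [hE1, Submodule.mem_bot] at hcx
          rw [mul_smul, hcx, smul_zero]
        · rw [add_smul, hy, hz, add_zero]
    · have : a • x ∈ ℰ n := by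
        have := hact n 0 a ha x hx
        rwa [add_zero] at this
      rw [hbot n hn hns, Submodule.mem_bot] at this
      exact this
  -- On `ℰ 0`, the action of `a` agrees with the action of its degree-0 component.
  have hsmul : ∀ (a : A) (x : E), x ∈ ℰ 0 →
      a • x = ((DirectSum.decompose 𝒜 a 0 : 𝒜 0) : A) • x := by
    intro a x hx
    conv_lhs => rw [← DirectSum.sum_support_decompose 𝒜 a]
    rw [Finset.sum_smul]
    refine Finset.sum_eq_single 0 (fun b _ hb => ?_) (fun h0 => ?_)
    · exact hEzero b hb _ (SetLike.coe_mem _) x hx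
    · rw [DFinsupp.notMem_support_iff.mp h0]
      simp
  have hsmul0 : ∀ (a : A) (x : E), x ∈ ℰ 0 → a • x ∈ ℰ 0 := by
    intro a x hx
    rw [hsmul a x hx]
    have := hact 0 0 _ (SetLike.coe_mem (DirectSum.decompose 𝒜 a 0)) x hx
    rwa [add_zero] at this
  -- First splitting condition holds for any submodule contained in a single grade.
  have key : ∀ (P : Submodule K E) (n₀ : ℤ), P ≤ ℰ n₀ → P = ⨆ n, P ⊓ ℰ n := by
    intro P n₀ hP
    refine le_antisymm ?_ (iSup_le fun n => inf_le_left)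
    exact le_trans (le_inf le_rfl hP) (le_iSup (fun n => P ⊓ ℰ n) n₀)
  by_cases hs0 : s = 0
  · -- the whole module is concentrated in degree 0; use semisimplicity of `A₀`
    subst hs0
    have hall : ∀ x : E, x ∈ ℰ 0 := by
      intro x
      rw [← DirectSum.sum_support_decompose ℰ x]
      refine Submodule.sum_mem _ fun i _ => ?_
      by_cases hi : i = 0
      · subst hi; exact SetLike.coe_mem _
      · have h0 : (DirectSum.decompose ℰ x i : E) ∈ (⊥ : Submodule K E) :=
          (hbot i hi hi).le (SetLike.coe_mem _)
        rw [(Submodule.mem_bot K).mp h0]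
        exact zero_mem _
    letI : IsScalarTower A₀ A E := ⟨fun a₀ a x => by
      show ((a₀ : A) • a) • x = (a₀ : A) • (a • x)
      rw [smul_eq_mul, mul_smul]⟩
    obtain ⟨T₀, hT₀⟩ := exists_isCompl (Submodule.restrictScalars A₀ S)
    refine ⟨{ carrier := T₀,
              add_mem' := fun ha hb => T₀.add_mem ha hb,
              zero_mem' := T₀.zero_mem,
              smul_mem' := ?_ }, ?_, ?_, ?_⟩
    · intro a x hx
      show a • x ∈ T₀
      rw [hsmul a x (hall x)]
      have hmem : ((DirectSum.decompose 𝒜 a 0 : 𝒜 0) : A) ∈ A₀ := by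
        have : ((DirectSum.decompose 𝒜 a 0 : 𝒜 0) : A) ∈ Subalgebra.toSubmodule A₀ := by
          rw [hA₀]; exact SetLike.coe_mem _
        exact this
      exact T₀.smul_mem ⟨_, hmem⟩ hx
    · refine key _ 0 ?_
      intro x _
      exact hall x
    · ext x
      simp only [Submodule.mem_inf, Submodule.mem_bot]
      constructor
      · rintro ⟨h1, h2⟩
        have : x ∈ (Submodule.restrictScalars A₀ S ⊓ T₀ : Submodule A₀ E) := ⟨h1, h2⟩
        rw [hT₀.disjoint.eq_bot, Submodule.mem_bot] at this
        exact this
      · rintro rfl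
        exact ⟨zero_mem _, zero_mem _⟩
    · rw [eq_top_iff]
      intro x _
      have : x ∈ (Submodule.restrictScalars A₀ S ⊔ T₀ : Submodule A₀ E) := by
        rw [hT₀.codisjoint.eq_top]; trivial
      obtain ⟨y, hy, z, hz, rfl⟩ := Submodule.mem_sup.mp this
      exact Submodule.add_mem _ (Submodule.mem_sup_left hy) (Submodule.mem_sup_right hz)
  · -- `s ≠ 0` : take `T := ℰ 0`, which is an `A`-submodule
    refine ⟨{ carrier := ℰ 0,
              add_mem' := fun ha hb => (ℰ 0).add_mem ha hb,
              zero_mem' := (ℰ 0).zero_mem,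
              smul_mem' := fun a x hx => hsmul0 a x hx }, ?_, ?_, ?_⟩
    · refine key _ 0 ?_
      intro x hx
      exact hx
    · rw [eq_bot_iff]
      rintro x ⟨h1, h2⟩
      have hx0 : x ∈ ℰ 0 := h2
      have hxs : x ∈ ℰ s := hSgrade h1
      have hd : Disjoint (ℰ s) (ℰ 0) := hindep.pairwiseDisjoint hs0
      have hx : x = 0 := Submodule.disjoint_def.mp hd x hxs hx0
      rw [hx]
      exact zero_mem _
    · rw [eq_top_iff]
      intro x _
      rw [← DirectSum.sum_support_decompose ℰ x]
      refine Submodule.sum_mem _ fun i _ => ?_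
      by_cases hi : i = 0
      · subst hi
        exact Submodule.mem_sup_right (SetLike.coe_mem _)
      · exact Submodule.mem_sup_left (hQgrade i hi (SetLike.coe_mem _))
end

section
/- (Lemma 6.2) Fix an integer r > 0. Let M be a finite-dimensional A-module equipped with an 𝔞-grading M = ⊕_{i≥0} M_i such that M_i = 0 for all i ≥ r and such that the grade-0 component M_0 is stable under A_0. Let L be a completely reducible A-module and let 0 → L →ι E →π M → 0 be a short exact sequence of A-modules equipped with an 𝔞-grading E = E_0 ⊕ E_1 ⊕ ⋯ ⊕ E_r such that ι(L) = E_r and π is graded of degree 0 (π(E_i) = M_i for i < r and π(E_r) = 0). Then the grade-0 term may be rechosen: there exists an A_0-submodule E_0' of E such that E = E_0' ⊕ E_1 ⊕ ⋯ ⊕ E_r is again an 𝔞-grading of E (i.e. 𝔞_j E_0' ⊆ E_j for all j), π maps E_0' isomorphically onto M_0, and π is graded of degree 0 for the new grading. -/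
/-- Lemma 6.2: let `A` be a finite-dimensional `K`-algebra, `A₀ ⊆ A` a subalgebra which is a
semisimple ring, and `𝒶 : ℕ → Submodule K A` the graded components of a graded subalgebra `𝔞`
of `A` (so `𝒶 i · 𝒶 j ⊆ 𝒶 (i+j)`) with `𝒶 0 ⊆ A₀`.  Fix `r > 0`.  Let `M` be a
finite-dimensional `A`-module with an `𝔞`-grading `ℳ` such that `ℳ i = 0` for `i ≥ r` and with
`ℳ 0` stable under `A₀`.  Let `L` be a completely reducible `A`-module, and let
`0 → L →ι E →π M → 0` be a short exact sequence of `A`-modules equipped with an `𝔞`-grading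
`ℰ` of `E` (vanishing in grades `> r`) such that `ι(L) = ℰ r` and `π` is graded of degree 0
(`π(ℰ i) = ℳ i` for `i < r`, `π(ℰ r) = 0`).  Then the grade-0 term may be rechosen: there is an
`A₀`-stable `K`-subspace `E₀'` of `E` such that replacing `ℰ 0` by `E₀'` again yields an
`𝔞`-grading of `E`, `π` maps `E₀'` isomorphically onto `ℳ 0`, and the remaining graded pieces
`ℰ 1, …, ℰ r` are unchanged. -/
theorem regrade_zero_term
    {K : Type*} [Field K] {A : Type*} [Ring A] [Algebra K A] [FiniteDimensional K A]
    (A₀ : Subalgebra K A) (hA₀ss : IsSemisimpleRing A₀)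
    (𝒶 : ℕ → Submodule K A)
    (h𝒶mul : ∀ i j : ℕ, ∀ x ∈ 𝒶 i, ∀ y ∈ 𝒶 j, x * y ∈ 𝒶 (i + j))
    (h𝒶0 : 𝒶 0 ≤ Subalgebra.toSubmodule A₀)
    (r : ℕ) (hr : 0 < r)
    (M : Type*) [AddCommGroup M] [Module A M] [Module K M] [IsScalarTower K A M]
    [FiniteDimensional K M]
    (ℳ : ℕ → Submodule K M) (hℳindep : iSupIndep ℳ) (hℳsup : ⨆ i, ℳ i = ⊤)
    (hℳact : ∀ i j : ℕ, ∀ x ∈ 𝒶 i, ∀ m ∈ ℳ j, x • m ∈ ℳ (i + j))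
    (hℳvanish : ∀ i : ℕ, r ≤ i → ℳ i = ⊥)
    (hℳ0stable : ∀ a ∈ A₀, ∀ m ∈ ℳ 0, a • m ∈ ℳ 0)
    (L : Type*) [AddCommGroup L] [Module A L] [Module K L] [IsScalarTower K A L]
    [FiniteDimensional K L] [IsSemisimpleModule A L]
    (E : Type*) [AddCommGroup E] [Module A E] [Module K E] [IsScalarTower K A E]
    [FiniteDimensional K E]
    (ι : L →ₗ[A] E) (π : E →ₗ[A] M)
    (hιinj : Function.Injective ι) (hπsurj : Function.Surjective π)
    (hexact : LinearMap.range ι = LinearMap.ker π)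
    (ℰ : ℕ → Submodule K E) (hℰindep : iSupIndep ℰ) (hℰsup : ⨆ i, ℰ i = ⊤)
    (hℰact : ∀ i j : ℕ, ∀ x ∈ 𝒶 i, ∀ m ∈ ℰ j, x • m ∈ ℰ (i + j))
    (hℰvanish : ∀ i : ℕ, r < i → ℰ i = ⊥)
    (hιrange : (LinearMap.range ι).restrictScalars K = ℰ r)
    (hπgraded : ∀ i : ℕ, i < r → Submodule.map (π.restrictScalars K) (ℰ i) = ℳ i)
    (hπtop : Submodule.map (π.restrictScalars K) (ℰ r) = ⊥) :
    ∃ E₀' : Submodule K E,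
      (∀ a ∈ A₀, ∀ x ∈ E₀', a • x ∈ E₀') ∧
      iSupIndep (fun i : ℕ => if i = 0 then E₀' else ℰ i) ∧
      (⨆ i : ℕ, (if i = 0 then E₀' else ℰ i)) = ⊤ ∧
      (∀ i j : ℕ, ∀ x ∈ 𝒶 i, ∀ m ∈ (if j = 0 then E₀' else ℰ j),
        x • m ∈ (if i + j = 0 then E₀' else ℰ (i + j))) ∧
      Submodule.map (π.restrictScalars K) E₀' = ℳ 0 ∧
      (∀ x ∈ E₀', π x = 0 → x = 0) := by
  classical
  set πK := π.restrictScalars K with hπKdef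
  have hπKapp : ∀ x : E, πK x = π x := fun _ => rfl
  -- membership in ℰ r ↔ π x = 0
  have hker : ∀ x : E, x ∈ ℰ r ↔ π x = 0 := by
    intro x
    rw [← hιrange]
    constructor
    · intro hx
      have hx' : x ∈ LinearMap.range ι := hx
      rw [hexact] at hx'
      exact hx'
    · intro hx
      have hx' : x ∈ LinearMap.ker π := hx
      rw [← hexact] at hx'
      exact hx'
  -- V = π⁻¹(ℳ 0)
  set V : Submodule K E := Submodule.comap πK (ℳ 0) with hVdef
  have hmemV : ∀ x : E, x ∈ V ↔ π x ∈ ℳ 0 := fun x => Iff.rfl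
  have hE0V : ℰ 0 ≤ V := by
    intro x hx
    rw [hmemV]
    rw [← hπgraded 0 hr]
    exact ⟨x, hx, rfl⟩
  have hErV : ℰ r ≤ V := by
    intro x hx
    rw [hmemV, (hker x).1 hx]
    exact (ℳ 0).zero_mem
  -- Z = rest
  set Z : Submodule K E := ⨆ i, ⨆ (_ : i ≠ 0 ∧ i ≠ r), ℰ i with hZdef
  have hZle0 : Z ≤ ⨆ i, ⨆ (_ : i ≠ 0), ℰ i :=
    iSup_le fun i => iSup_le fun hi => le_iSup_of_le i (le_iSup_of_le hi.1 le_rfl)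
  have hZler : Z ≤ ⨆ i, ⨆ (_ : i ≠ r), ℰ i :=
    iSup_le fun i => iSup_le fun hi => le_iSup_of_le i (le_iSup_of_le hi.2 le_rfl)
  have hZV : Z ⊓ V = ⊥ := by
    rw [eq_bot_iff]
    rintro x ⟨hxZ, hxV⟩
    have hmap : Submodule.map πK Z ≤ ⨆ i, ⨆ (_ : i ≠ 0), ℳ i := by
      rw [hZdef, Submodule.map_iSup]
      refine iSup_le fun i => ?_
      rw [Submodule.map_iSup]
      refine iSup_le fun hi => ?_
      rcases lt_or_ge i r with h | h
      · rw [hπgraded i h]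
        exact le_iSup_of_le i (le_iSup_of_le hi.1 le_rfl)
      · rw [hℰvanish i (lt_of_le_of_ne h (Ne.symm hi.2))]
        simp
    have h1 : πK x ∈ ⨆ i, ⨆ (_ : i ≠ 0), ℳ i := hmap ⟨x, hxZ, rfl⟩
    have h0 : π x = 0 := by
      have hd := iSupIndep_def.mp hℳindep 0
      have := Submodule.disjoint_def.mp hd (πK x) hxV h1
      rw [← hπKapp]; exact this
    have hxr : x ∈ ℰ r := (hker x).2 h0
    have hd := iSupIndep_def.mp hℰindep r
    exact (Submodule.mem_bot K).mpr
      (Submodule.disjoint_def.mp hd x hxr (hZler hxZ))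
  have htop3 : (ℰ 0 ⊔ ℰ r) ⊔ Z = ⊤ := by
    rw [eq_top_iff, ← hℰsup]
    refine iSup_le fun i => ?_
    by_cases h0 : i = 0
    · subst h0; exact le_sup_of_le_left le_sup_left
    · by_cases hrr : i = r
      · subst hrr; exact le_sup_of_le_left le_sup_right
      · exact le_sup_of_le_right (le_iSup_of_le i (le_iSup_of_le ⟨h0, hrr⟩ le_rfl))
  have hVeq : V = ℰ 0 ⊔ ℰ r := by
    have h := sup_inf_assoc_of_le (x := ℰ 0 ⊔ ℰ r) Z (sup_le hE0V hErV)
    rw [htop3, top_inf_eq, hZV, sup_bot_eq] at h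
    exact h
  -- ℰ r as an A₀-submodule
  have hsmulA₀ : ∀ (a : A₀) (x : E), a • x = (a : A) • x := fun _ _ => rfl
  set Rₐ : Submodule A₀ E :=
    { carrier := ℰ r
      add_mem' := fun h1 h2 => (ℰ r).add_mem h1 h2
      zero_mem' := (ℰ r).zero_mem
      smul_mem' := by
        intro a x hx
        rw [SetLike.mem_coe, hker] at hx ⊢
        rw [hsmulA₀, map_smul, hx, smul_zero] } with hRdef
  have hmemR : ∀ x : E, x ∈ Rₐ ↔ x ∈ ℰ r := fun _ => Iff.rfl
  obtain ⟨Cₐ, hCompl⟩ := exists_isCompl Rₐ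
  -- E₀'
  set E₀' : Submodule K E :=
    { carrier := {x : E | x ∈ Cₐ ∧ x ∈ V}
      add_mem' := fun h1 h2 => ⟨Cₐ.add_mem h1.1 h2.1, V.add_mem h1.2 h2.2⟩
      zero_mem' := ⟨Cₐ.zero_mem, V.zero_mem⟩
      smul_mem' := by
        intro k x hx
        refine ⟨?_, V.smul_mem k hx.2⟩
        have h1 : (algebraMap K A₀ k) • x = k • x := by
          rw [hsmulA₀]
          show (algebraMap K A k) • x = k • x
          rw [algebraMap_smul]
        rw [← h1]
        exact Cₐ.smul_mem _ hx.1 } with hE₀def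
  have hmemE₀ : ∀ x : E, x ∈ E₀' ↔ x ∈ Cₐ ∧ x ∈ V := fun _ => Iff.rfl
  have hE₀V : E₀' ≤ V := fun x hx => ((hmemE₀ x).1 hx).2
  -- E₀' ∩ ℰ r = 0
  have hdisjER : ∀ x ∈ E₀', x ∈ ℰ r → x = 0 := by
    intro x hx hxr
    exact Submodule.disjoint_def.mp hCompl.symm.disjoint x ((hmemE₀ x).1 hx).1
      ((hmemR x).2 hxr)
  -- V ≤ E₀' ⊔ ℰ r
  have hVle : V ≤ E₀' ⊔ ℰ r := by
    intro x hx
    have hxtop : x ∈ Rₐ ⊔ Cₐ := by rw [hCompl.sup_eq_top]; trivial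
    obtain ⟨s, hs, c, hc, hsc⟩ := Submodule.mem_sup.mp hxtop
    have hsr : s ∈ ℰ r := (hmemR s).1 hs
    have hcE : c ∈ E₀' := by
      rw [hmemE₀]
      refine ⟨hc, ?_⟩
      have : c = x - s := by rw [← hsc]; abel
      rw [this]
      exact V.sub_mem hx (hErV hsr)
    exact Submodule.mem_sup.mpr ⟨c, hcE, s, hsr, by rw [← hsc]; abel⟩
  have hℰ0le : ℰ 0 ≤ E₀' ⊔ ℰ r := le_trans hE0V hVle
  -- A₀-stability
  have hstab : ∀ a ∈ A₀, ∀ x ∈ E₀', a • x ∈ E₀' := by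
    intro a ha x hx
    rw [hmemE₀] at hx ⊢
    constructor
    · have : (⟨a, ha⟩ : A₀) • x = a • x := hsmulA₀ _ _
      rw [← this]
      exact Cₐ.smul_mem _ hx.1
    · rw [hmemV, map_smul]
      exact hℳ0stable a ha _ ((hmemV x).1 hx.2)
  -- independence
  have hindep : iSupIndep (fun i : ℕ => if i = 0 then E₀' else ℰ i) := by
    rw [iSupIndep_def]
    intro k
    rw [Submodule.disjoint_def]
    intro x hxk hxs
    by_cases hk : k = 0
    · subst hk
      rw [if_pos rfl] at hxk
      have hle : (⨆ j, ⨆ (_ : j ≠ 0), (if j = 0 then E₀' else ℰ j)) ≤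
          ⨆ j, ⨆ (_ : j ≠ 0), ℰ j := by
        refine iSup_le fun j => iSup_le fun hj => ?_
        rw [if_neg hj]
        exact le_iSup_of_le j (le_iSup_of_le hj le_rfl)
      have hxs' : x ∈ ⨆ j, ⨆ (_ : j ≠ 0), ℰ j := hle hxs
      have hxV : x ∈ ℰ 0 ⊔ ℰ r := by rw [← hVeq]; exact hE₀V hxk
      obtain ⟨e0, he0, er, her, hsum⟩ := Submodule.mem_sup.mp hxV
      have he0' : e0 ∈ ⨆ j, ⨆ (_ : j ≠ 0), ℰ j := by
        have : e0 = x - er := by rw [← hsum]; abel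
        rw [this]
        have hrle : ℰ r ≤ ⨆ j, ⨆ (_ : j ≠ 0), ℰ j :=
          le_iSup_of_le r (le_iSup_of_le hr.ne' le_rfl)
        exact Submodule.sub_mem _ hxs' (hrle her)
      have he00 : e0 = 0 :=
        Submodule.disjoint_def.mp (iSupIndep_def.mp hℰindep 0) e0 he0 he0'
      have hxr : x ∈ ℰ r := by rw [← hsum, he00, zero_add]; exact her
      exact hdisjER x hxk hxr
    · rw [if_neg hk] at hxk
      -- bound the iSup
      have hle : (⨆ j, ⨆ (_ : j ≠ k), (if j = 0 then E₀' else ℰ j)) ≤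
          E₀' ⊔ ⨆ j, ⨆ (_ : j ≠ k ∧ j ≠ 0), ℰ j := by
        refine iSup_le fun j => iSup_le fun hj => ?_
        by_cases hj0 : j = 0
        · rw [if_pos hj0]; exact le_sup_left
        · rw [if_neg hj0]
          exact le_sup_of_le_right (le_iSup_of_le j (le_iSup_of_le ⟨hj, hj0⟩ le_rfl))
      obtain ⟨e', he', y, hy, hsum⟩ := Submodule.mem_sup.mp (hle hxs)
      have hSle0 : (⨆ j, ⨆ (_ : j ≠ k ∧ j ≠ 0), ℰ j) ≤ ⨆ j, ⨆ (_ : j ≠ 0), ℰ j :=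
        iSup_le fun j => iSup_le fun hj => le_iSup_of_le j (le_iSup_of_le hj.2 le_rfl)
      have hSlek : (⨆ j, ⨆ (_ : j ≠ k ∧ j ≠ 0), ℰ j) ≤ ⨆ j, ⨆ (_ : j ≠ k), ℰ j :=
        iSup_le fun j => iSup_le fun hj => le_iSup_of_le j (le_iSup_of_le hj.1 le_rfl)
      have he'V : e' ∈ ℰ 0 ⊔ ℰ r := by rw [← hVeq]; exact hE₀V he'
      obtain ⟨e0, he0, er, her, hsum'⟩ := Submodule.mem_sup.mp he'V
      have he0' : e0 ∈ ⨆ j, ⨆ (_ : j ≠ 0), ℰ j := by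
        have heq : e0 = x - er - y := by rw [← hsum, ← hsum']; abel
        rw [heq]
        have hkle : ℰ k ≤ ⨆ j, ⨆ (_ : j ≠ 0), ℰ j :=
          le_iSup_of_le k (le_iSup_of_le hk le_rfl)
        have hrle : ℰ r ≤ ⨆ j, ⨆ (_ : j ≠ 0), ℰ j :=
          le_iSup_of_le r (le_iSup_of_le hr.ne' le_rfl)
        exact Submodule.sub_mem _ (Submodule.sub_mem _ (hkle hxk) (hrle her)) (hSle0 hy)
      have he00 : e0 = 0 :=
        Submodule.disjoint_def.mp (iSupIndep_def.mp hℰindep 0) e0 he0 he0'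
      have he'r : e' ∈ ℰ r := by rw [← hsum', he00, zero_add]; exact her
      have he'0 : e' = 0 := hdisjER e' he' he'r
      have hxy : x ∈ ⨆ j, ⨆ (_ : j ≠ k), ℰ j := by
        rw [← hsum, he'0, zero_add]
        exact hSlek hy
      exact Submodule.disjoint_def.mp (iSupIndep_def.mp hℰindep k) x hxk hxy
  -- sup = ⊤
  have hsup : (⨆ i : ℕ, (if i = 0 then E₀' else ℰ i)) = ⊤ := by
    rw [eq_top_iff, ← hℰsup]
    refine iSup_le fun i => ?_
    by_cases h0 : i = 0
    · subst h0
      refine hℰ0le.trans (sup_le ?_ ?_)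
      · exact le_iSup_of_le (f := fun i : ℕ => if i = 0 then E₀' else ℰ i) 0
          (by simp)
      · exact le_iSup_of_le (f := fun i : ℕ => if i = 0 then E₀' else ℰ i) r
          (by simp [hr.ne'])
    · exact le_iSup_of_le (f := fun i : ℕ => if i = 0 then E₀' else ℰ i) i
        (by simp [h0])
  -- grading action
  have hact : ∀ i j : ℕ, ∀ x ∈ 𝒶 i, ∀ m ∈ (if j = 0 then E₀' else ℰ j),
      x • m ∈ (if i + j = 0 then E₀' else ℰ (i + j)) := by
    intro i j x hx m hm
    by_cases hj : j = 0
    · subst hj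
      rw [if_pos rfl] at hm
      by_cases hi : i = 0
      · subst hi
        rw [if_pos rfl]
        exact hstab x (h𝒶0 hx) m hm
      · rw [if_neg (by omega)]
        have hmV : m ∈ ℰ 0 ⊔ ℰ r := by rw [← hVeq]; exact hE₀V hm
        obtain ⟨m0, hm0, mr, hmr, hsum⟩ := Submodule.mem_sup.mp hmV
        have h1 : x • m0 ∈ ℰ (i + 0) := hℰact i 0 x hx m0 hm0
        have h2 : x • mr = 0 := by
          have := hℰact i r x hx mr hmr
          rw [hℰvanish (i + r) (by omega)] at this
          exact (Submodule.mem_bot K).mp this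
        have : x • m = x • m0 := by rw [← hsum, smul_add, h2, add_zero]
        rw [this]
        simpa using h1
    · rw [if_neg hj] at hm
      rw [if_neg (by omega)]
      exact hℰact i j x hx m hm
  -- map
  have hmap0 : Submodule.map πK E₀' = ℳ 0 := by
    apply le_antisymm
    · rintro _ ⟨x, hx, rfl⟩
      exact (hmemV x).1 (hE₀V hx)
    · intro m hm
      rw [← hπgraded 0 hr] at hm
      obtain ⟨e, he, rfl⟩ := hm
      obtain ⟨c, hc, s, hs, hcs⟩ := Submodule.mem_sup.mp (hℰ0le he)
      refine ⟨c, hc, ?_⟩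
      show π c = π e
      rw [← hcs, map_add, (hker s).1 hs, add_zero]
  -- injectivity
  have hinj : ∀ x ∈ E₀', π x = 0 → x = 0 := by
    intro x hx h0
    exact hdisjER x hx ((hker x).2 h0)
  exact ⟨E₀', hstab, hindep, hsup, hact, hmap0, hinj⟩
end
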